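/- Let 𝒜 be a structure and x̄ a tuple in 𝒜. Let α₁ > β₁, …, α_n > β_n be ordinals with β₁ ≥ β₂ ≥ ⋯ ≥ β_n. Let ū₁, …, ū_n and v̄₁, …, v̄_n be tuples in 𝒜 with |ū_{i+1}| = |ū_i| + |v̄_i| for each i, with |x̄| ≥ |ū_n| + |v̄_n|, and such that v̄_i is α_i-free over ū_i for each i. Then there is a tuple ȳ in 𝒜 of the same length as x̄ such that for each i = 1, …, n: (1) the initial segment of ȳ of length |ū₁| equals that of x̄; (2) x̄ restricted to its first |ū_i| + |v̄_i| entries is ≤_{β_i} ȳ restricted to its first |ū_i| + |v̄_i| entries; and (3) ȳ restricted to its first |ū_i| + |v̄_i| entries is not automorphic in 𝒜 to the tuple ū_i v̄_i. -/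

import Mathlib

/-!
Common framework: oracle computability via codes, Turing reducibility,
iterated jumps along ordinals, and first-order structures on ℕ with
atomic diagrams.
-/

namespace DCC

open Classical in
/-- Characteristic value of a proposition. -/
noncomputable def cv (p : Prop) : ℕ := if p then 1 else 0

/-- Codes for partial functions computable relative to an oracle
(Kleene-style codes, with an extra code for the oracle). -/
inductive OCode : Type
  | zero | succ | left | right | oracle
  | pair (a b : OCode)
  | comp (a b : OCode)
  | prec (a b : OCode)
  | rfind' (a : OCode)

/-- A Gödel numbering of oracle codes. -/
def OCode.encode : OCode → ℕ
  | .zero => 0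
  | .succ => 1
  | .left => 2
  | .right => 3
  | .oracle => 4
  | .pair a b => (Nat.pair a.encode b.encode) * 4 + 5
  | .comp a b => (Nat.pair a.encode b.encode) * 4 + 6
  | .prec a b => (Nat.pair a.encode b.encode) * 4 + 7
  | .rfind' a => a.encode * 4 + 8

/-- Evaluation of an oracle code relative to an oracle `O : ℕ →. ℕ`. -/
def evalo (O : ℕ →. ℕ) : OCode → ℕ →. ℕ
  | .zero => fun _ => Part.some 0
  | .succ => fun n => Part.some (n + 1)
  | .left => fun n => Part.some n.unpair.1
  | .right => fun n => Part.some n.unpair.2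
  | .oracle => O
  | .pair a b => fun n => Nat.pair <$> evalo O a n <*> evalo O b n
  | .comp a b => fun n => evalo O b n >>= evalo O a
  | .prec a b =>
    Nat.unpaired fun m n =>
      n.rec (evalo O a m) fun y IH => do
        let i ← IH
        evalo O b (Nat.pair m (Nat.pair y i))
  | .rfind' a =>
    Nat.unpaired fun m n =>
      (Nat.rfind fun k => (fun x => x = 0) <$> evalo O a (Nat.pair m (k + n))).map (· + n)

/-- The characteristic (partial) function of a set of naturals. -/
noncomputable def chi (A : Set ℕ) : ℕ →. ℕ := fun n => Part.some (cv (n ∈ A))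

/-- `f` is partial recursive relative to the oracle `O`. -/
def RecursiveIn (O : ℕ →. ℕ) (f : ℕ →. ℕ) : Prop := ∃ c : OCode, evalo O c = f

/-- Turing reducibility for sets of naturals: `TR A B` means `A ≤_T B`. -/
def TR (A B : Set ℕ) : Prop := RecursiveIn (chi B) (chi A)

/-- Turing equivalence of sets of naturals. -/
def TE (A B : Set ℕ) : Prop := TR A B ∧ TR B A

/-- The Turing join `A ⊕ B`. -/
def join (A B : Set ℕ) : Set ℕ :=
  {n | (∃ m ∈ A, n = 2 * m) ∨ (∃ m ∈ B, n = 2 * m + 1)}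

/-- The graph of a function `ℕ → ℕ`, as a set of naturals; used to measure the
Turing degree of a function. -/
def fgraph (f : ℕ → ℕ) : Set ℕ := {n | f n.unpair.1 = n.unpair.2}

/-- A function `ℕ → ℕ` is computable in the set `A`. -/
def FRecIn (f : ℕ → ℕ) (A : Set ℕ) : Prop := RecursiveIn (chi A) (fun n => Part.some (f n))

/-- `X` is computably enumerable relative to the oracle `O`. -/
def CEIn (X O : Set ℕ) : Prop := ∃ c : OCode, X = {n | (evalo (chi O) c n).Dom}

/-- `X` is `Π⁰₁` relative to the oracle `O`. -/
def PiOneIn (X O : Set ℕ) : Prop := CEIn Xᶜ O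

/-- A set is computable if it is Turing reducible to the trivial oracle. -/
def ComputableSet (X : Set ℕ) : Prop := TR X ∅

/-- The Turing jump of a set. -/
def jump (A : Set ℕ) : Set ℕ :=
  {n | ∃ c : OCode, c.encode = n.unpair.1 ∧ (evalo (chi A) c n.unpair.2).Dom}

open Classical in
/-- The `α`-th iterated Turing jump `A^(α)` of `A`, defined by transfinite recursion;
at countable limit stages we take the join along an enumeration of the earlier levels. -/
noncomputable def jumpIter (A : Set ℕ) (α : Ordinal.{0}) : Set ℕ :=
  Ordinal.limitRecOn α A (fun _ ih => jump ih)
    (fun o _ ih =>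
      if h : ∃ f : ℕ → {β // β < o}, Function.Surjective f then
        {n | n.unpair.2 ∈ ih (h.choose n.unpair.1).1 (h.choose n.unpair.1).2}
      else ∅)

/-- The level of the jump hierarchy corresponding to `Δ⁰_α` (Ash–Knight convention:
`Δ⁰_n`-complete is `0^(n-1)` for finite `n ≥ 1`, while `Δ⁰_α`-complete is `0^(α)`
for infinite `α`). -/
noncomputable def hLevel (α : Ordinal.{0}) : Ordinal.{0} :=
  if α < Ordinal.omega0 then α - 1 else α

/-- A `Δ⁰_α(C)`-complete set. -/
noncomputable def deltaComplete (C : Set ℕ) (α : Ordinal.{0}) : Set ℕ :=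
  jumpIter C (hLevel α)

/-- `X` is `Δ⁰_α` relative to `C`. -/
def DeltaIn (X : Set ℕ) (α : Ordinal.{0}) (C : Set ℕ) : Prop :=
  TR X (deltaComplete C α)

/-- `X` is `Σ⁰_α` relative to `C`, i.e. c.e. in a `Δ⁰_α(C)`-complete set. -/
def SigmaIn (X : Set ℕ) (α : Ordinal.{0}) (C : Set ℕ) : Prop :=
  CEIn X (deltaComplete C α)

/-- An ordinal is computable if it is at most the order type of a computable
well-order on ℕ. -/
def IsComputableOrdinal (α : Ordinal.{0}) : Prop :=
  ∃ r : ℕ → ℕ → Prop, (∃ h : IsWellOrder ℕ r, α ≤ @Ordinal.type ℕ r h) ∧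
    ComputableSet {n | r n.unpair.1 n.unpair.2}

/-- An ordinal is countable. -/
def IsCountableOrdinal (α : Ordinal.{0}) : Prop := α.card ≤ Cardinal.aleph0

open FirstOrder FirstOrder.Language

variable (L : FirstOrder.Language.{0, 0})

/-- A Gödel number for a (bounded) formula over an encodable language. -/
def gnum [∀ i, Encodable (L.Functions i)] [∀ i, Encodable (L.Relations i)]
    {α : Type} [Encodable α] {n : ℕ} (φ : L.BoundedFormula α n) : ℕ :=
  Encodable.encode φ.listEncode

/-- The atomic diagram of a structure on ℕ: the set of Gödel numbers of atomic and
negated atomic sentences with parameters from ℕ which are true in the structure. -/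
def atomicDiagram [∀ i, Encodable (L.Functions i)] [∀ i, Encodable (L.Relations i)]
    (SA : L.Structure ℕ) : Set ℕ :=
  { n | ∃ φ : L.Formula ℕ,
      (φ.IsAtomic ∨ ∃ ψ : L.Formula ℕ, ψ.IsAtomic ∧ φ = ψ.not) ∧
      n = gnum L φ ∧ @Formula.Realize L ℕ SA ℕ φ id }

/-- Isomorphisms between two structures on ℕ. -/
def SIso (SA SB : L.Structure ℕ) : Type := @FirstOrder.Language.Equiv L ℕ ℕ SA SB

/-- The underlying function `ℕ → ℕ` of an isomorphism. -/
def SIso.fn {SA SB : L.Structure ℕ} (g : SIso L SA SB) : ℕ → ℕ :=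
  (@FirstOrder.Language.Equiv.toEquiv L ℕ ℕ SA SB g : ℕ → ℕ)

/-- `SB` is a copy of (i.e. is isomorphic to) `SA`. -/
def Copies (SA SB : L.Structure ℕ) : Prop := Nonempty (SIso L SA SB)

section Enc

variable [∀ i, Encodable (L.Functions i)] [∀ i, Encodable (L.Relations i)]

/-- The structure `SB` is computable in the degree (represented by) `C`. -/
def CComputable (SB : L.Structure ℕ) (C : Set ℕ) : Prop :=
  TR (atomicDiagram L SB) C

/-- `D` computes an isomorphism between `SB` and `SC`. -/
def ComputesIso (D : Set ℕ) (SB SC : L.Structure ℕ) : Prop :=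
  ∃ g : SIso L SB SC, FRecIn (SIso.fn L g) D

/-- `D` computes an isomorphism between any two `C`-computable copies of `SA`. -/
def ComputesIsosOver (SA : L.Structure ℕ) (C D : Set ℕ) : Prop :=
  ∀ SB SC : L.Structure ℕ, Copies L SA SB → Copies L SA SC →
    CComputable L SB C → CComputable L SC C → ComputesIso L D SB SC

/-- `D` is the degree of categoricity of `SA` relative to `C`. -/
def IsDegreeOfCategoricity (SA : L.Structure ℕ) (C D : Set ℕ) : Prop :=
  TR C D ∧ ComputesIsosOver L SA C D ∧
    ∀ D' : Set ℕ, TR C D' → ComputesIsosOver L SA C D' → TR D D'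

/-- `D` is a strong degree of categoricity of `SA` relative to `C`. -/
def IsStrongDegreeOfCategoricity (SA : L.Structure ℕ) (C D : Set ℕ) : Prop :=
  IsDegreeOfCategoricity L SA C D ∧
    ∃ SB SC : L.Structure ℕ, Copies L SA SB ∧ Copies L SA SC ∧
      CComputable L SB C ∧ CComputable L SC C ∧
      ∀ g : SIso L SB SC, TR D (join (fgraph (SIso.fn L g)) C)

/-- `SA` is `Δ⁰_α` categorical on the cone above `D`. -/
def DeltaCatAbove (SA : L.Structure ℕ) (α : Ordinal.{0}) (D : Set ℕ) : Prop :=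
  ∀ C : Set ℕ, TR D C →
    ∀ SB SC : L.Structure ℕ, Copies L SA SB → Copies L SA SC →
      CComputable L SB C → CComputable L SC C →
        ∃ g : SIso L SB SC, DeltaIn (fgraph (SIso.fn L g)) α C

/-- `SA` is computably categorical on the cone above `D`. -/
def CompCatAbove (SA : L.Structure ℕ) (D : Set ℕ) : Prop :=
  ∀ C : Set ℕ, TR D C →
    ∀ SB SC : L.Structure ℕ, Copies L SA SB → Copies L SA SC →
      CComputable L SB C → CComputable L SC C →
        ∃ g : SIso L SB SC, FRecIn (SIso.fn L g) C

end Enc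

/-- The standard back-and-forth relations `≤_α` on tuples from a structure on ℕ. -/
noncomputable def bf [∀ i, Encodable (L.Functions i)] [∀ i, Encodable (L.Relations i)]
    (SA : L.Structure ℕ) : Ordinal.{0} → List ℕ → List ℕ → Prop :=
  WellFounded.fix Ordinal.lt_wf (fun o ih a b =>
    a.length = b.length ∧
      if o = 0 then
        ∀ φ : L.Formula (Fin a.length), φ.IsQF → gnum L φ < a.length →
          @FirstOrder.Language.Formula.Realize L ℕ SA (Fin a.length) φ (fun i => a.getD (i : ℕ) 0) →
          @FirstOrder.Language.Formula.Realize L ℕ SA (Fin a.length) φ (fun i => b.getD (i : ℕ) 0)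
      else
        ∀ β (hβ : β < o), ∀ d : List ℕ, ∃ c : List ℕ, c.length = d.length ∧
          ih β hβ (b ++ d) (a ++ c))

/-- The tuple `abar` is `α`-free over `cbar` in the structure `SA`. -/
noncomputable def AlphaFree [∀ i, Encodable (L.Functions i)] [∀ i, Encodable (L.Relations i)]
    (SA : L.Structure ℕ) (α : Ordinal.{0}) (abar cbar : List ℕ) : Prop :=
  ∀ a1 : List ℕ, ∀ β < α, ∃ a' a1' : List ℕ,
    a'.length = abar.length ∧ a1'.length = a1.length ∧
    bf L SA β (cbar ++ abar ++ a1) (cbar ++ a' ++ a1') ∧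
    ¬ bf L SA α (cbar ++ a') (cbar ++ abar)



/-! ### Auxiliary lemmas for Statement 14 -/

section AuxBF

open FirstOrder FirstOrder.Language

section BF
variable [∀ i, Encodable (L.Functions i)] [∀ i, Encodable (L.Relations i)]
variable (SA : L.Structure ℕ)

/-- The quantifier-free transfer clause at level 0. -/
def QF0 (n : ℕ) (a b : List ℕ) : Prop :=
  ∀ φ : L.Formula (Fin n), φ.IsQF → gnum L φ < n →
    @FirstOrder.Language.Formula.Realize L ℕ SA (Fin n) φ (fun i => a.getD (i : ℕ) 0) →
    @FirstOrder.Language.Formula.Realize L ℕ SA (Fin n) φ (fun i => b.getD (i : ℕ) 0)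

theorem bf_def (o : Ordinal.{0}) (a b : List ℕ) :
    bf L SA o a b ↔ (a.length = b.length ∧
      if o = 0 then QF0 L SA a.length a b
      else ∀ β (_ : β < o), ∀ d : List ℕ, ∃ c : List ℕ, c.length = d.length ∧
          bf L SA β (b ++ d) (a ++ c)) := by
  unfold bf
  rw [WellFounded.fix_eq]
  rfl

theorem bf_length {o : Ordinal.{0}} {a b : List ℕ} (h : bf L SA o a b) :
    a.length = b.length := ((bf_def L SA o a b).1 h).1

theorem bf_zero {a b : List ℕ} :
    bf L SA 0 a b ↔ (a.length = b.length ∧ QF0 L SA a.length a b) := by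
  rw [bf_def]; simp

theorem bf_pos {o : Ordinal.{0}} (ho : o ≠ 0) {a b : List ℕ} :
    bf L SA o a b ↔ (a.length = b.length ∧
      ∀ β, β < o → ∀ d : List ℕ, ∃ c : List ℕ, c.length = d.length ∧
        bf L SA β (b ++ d) (a ++ c)) := by
  rw [bf_def]; simp [ho]

theorem bf_refl (o : Ordinal.{0}) (a : List ℕ) : bf L SA o a a := by
  induction o using Ordinal.induction generalizing a with
  | _ o ih =>
    rw [bf_def]
    refine ⟨rfl, ?_⟩
    split
    · exact fun φ _ _ h => h
    · exact fun β hβ d => ⟨d, rfl, ih β hβ _⟩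

theorem bf_trans {o : Ordinal.{0}} : ∀ {a b c : List ℕ},
    bf L SA o a b → bf L SA o b c → bf L SA o a c := by
  induction o using Ordinal.induction with
  | _ o ih =>
    intro a b c hab hbc
    by_cases ho : o = 0
    · subst ho
      rw [bf_zero] at hab hbc ⊢
      obtain ⟨h1, q1⟩ := hab
      obtain ⟨h2, q2⟩ := hbc
      rw [← h1] at q2
      exact ⟨h1.trans h2, fun φ hφ hg hr => q2 φ hφ hg (q1 φ hφ hg hr)⟩
    · rw [bf_pos L SA ho] at hab hbc ⊢
      obtain ⟨h1, q1⟩ := hab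
      obtain ⟨h2, q2⟩ := hbc
      refine ⟨h1.trans h2, fun β hβ d => ?_⟩
      obtain ⟨c1, hc1, H1⟩ := q2 β hβ d
      obtain ⟨c2, hc2, H2⟩ := q1 β hβ c1
      exact ⟨c2, hc2.trans hc1, ih β hβ H1 H2⟩

end BF

open FirstOrder FirstOrder.Language Encodable

theorem encode_fin {n : ℕ} (i : Fin n) : Encodable.encode i = (i : ℕ) := rfl

theorem encode_map_eq {A B : Type*} [Encodable A] [Encodable B] :
    ∀ (l₁ : List A) (l₂ : List B),
      l₁.map Encodable.encode = l₂.map Encodable.encode →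
      Encodable.encode l₁ = Encodable.encode l₂
  | [], [], _ => rfl
  | [], _ :: _, h => by simp at h
  | _ :: _, [], h => by simp at h
  | a :: l₁, b :: l₂, h => by
    simp only [List.map_cons, List.cons.injEq] at h
    rw [Encodable.encode_list_cons, Encodable.encode_list_cons, h.1,
      encode_map_eq l₁ l₂ h.2]

section Enc
variable [∀ i, Encodable (L.Functions i)] [∀ i, Encodable (L.Relations i)]

theorem encode_term_eq {γ δ : Type} [Encodable γ] [Encodable δ]
    (g : γ → δ) (hg : ∀ x2, Encodable.encode (g x2) = Encodable.encode x2) :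
    ∀ t : L.Term γ,
      ((t.relabel g).listEncode).map Encodable.encode
        = (t.listEncode).map Encodable.encode := by
  intro t
  induction t with
  | var a => simp [Term.relabel, Term.listEncode, Encodable.encode_inl, hg]
  | func f ts ih =>
    simp only [Term.relabel, Term.listEncode, List.map_cons, List.map_flatMap]
    congr 1
    exact List.flatMap_congr (fun i _ => ih i)

theorem encode_term_val_eq {γ δ : Type} [Encodable γ] [Encodable δ]
    (g : γ → δ) (hg : ∀ x2, Encodable.encode (g x2) = Encodable.encode x2)
    (t : L.Term γ) : Encodable.encode (t.relabel g) = Encodable.encode t :=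
  encode_map_eq _ _ (encode_term_eq L g hg t)

end Enc

open FirstOrder FirstOrder.Language Encodable

section Enc2
variable [∀ i, Encodable (L.Functions i)] [∀ i, Encodable (L.Relations i)]

theorem encode_relabelAux {m M k : ℕ} (f : Fin m → Fin M)
    (hf : ∀ i, ((f i : ℕ)) = (i : ℕ)) (x : Fin m ⊕ Fin k) :
    Encodable.encode (BoundedFormula.relabelAux (n := 0) (Sum.inl ∘ f) k x)
      = Encodable.encode x := by
  cases x with
  | inl a =>
    simp only [BoundedFormula.relabelAux, Function.comp_apply, Sum.map_inl,
      Equiv.sumAssoc_apply_inl_inl, Sum.map_inl, id_eq]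
    rw [Encodable.encode_inl, Encodable.encode_inl, encode_fin, encode_fin, hf]
  | inr i =>
    simp only [BoundedFormula.relabelAux, Function.comp_apply, Sum.map_inr, id_eq,
      Equiv.sumAssoc_apply_inr, Sum.map_inr]
    rw [Encodable.encode_inr, Encodable.encode_inr, encode_fin, encode_fin,
      finSumFinEquiv_apply_right]
    simp

theorem listEncode_relabel_qf {m M : ℕ} (f : Fin m → Fin M)
    (hf : ∀ i, ((f i : ℕ)) = (i : ℕ)) :
    ∀ {k : ℕ} (φ : L.BoundedFormula (Fin m) k), φ.IsQF →
      ((BoundedFormula.relabel (n := 0) (Sum.inl ∘ f) φ).listEncode).map Encodable.encode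
        = (φ.listEncode).map Encodable.encode := by
  intro k φ hφ
  induction hφ with
  | falsum =>
    show ((BoundedFormula.falsum.relabel (n := 0) (Sum.inl ∘ f)).listEncode).map _ = _
    rw [BoundedFormula.relabel_falsum]
    simp [BoundedFormula.listEncode, Encodable.encode_inr, Nat.zero_add]
  | of_isAtomic h =>
    cases h with
    | equal t₁ t₂ =>
      show ((BoundedFormula.relabel (n := 0) (Sum.inl ∘ f) (BoundedFormula.equal t₁ t₂)).listEncode).map _ = _
      have hrel : BoundedFormula.relabel (n := 0) (Sum.inl ∘ f) (BoundedFormula.equal t₁ t₂)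
          = BoundedFormula.equal (t₁.relabel (BoundedFormula.relabelAux (n := 0) (Sum.inl ∘ f) _))
            (t₂.relabel (BoundedFormula.relabelAux (n := 0) (Sum.inl ∘ f) _)) := rfl
      rw [hrel]
      simp [Term.bdEqual, BoundedFormula.listEncode, List.map_cons, List.map_nil,
        Encodable.encode_inl, Encodable.encode_sigma_val,
        encode_term_val_eq L _ (encode_relabelAux f hf) t₁,
        encode_term_val_eq L _ (encode_relabelAux f hf) t₂]
    | rel R ts =>
      show ((BoundedFormula.relabel (n := 0) (Sum.inl ∘ f) (BoundedFormula.rel R ts)).listEncode).map _ = _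
      have hrel : BoundedFormula.relabel (n := 0) (Sum.inl ∘ f) (BoundedFormula.rel R ts)
          = BoundedFormula.rel R (fun i =>
              (ts i).relabel (BoundedFormula.relabelAux (n := 0) (Sum.inl ∘ f) _)) := rfl
      rw [hrel]
      simp only [Relations.boundedFormula, BoundedFormula.listEncode, List.map_append,
        List.map_cons, List.map_nil, List.map_map]
      congr 1
      · simp [Nat.zero_add]
      · apply List.map_congr_left
        intro i _
        simp [Function.comp_apply, Encodable.encode_inl, Encodable.encode_sigma_val,
          encode_term_val_eq L _ (encode_relabelAux f hf) (ts i)]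
  | imp h₁ h₂ ih₁ ih₂ =>
    show ((BoundedFormula.relabel (n := 0) (Sum.inl ∘ f) (BoundedFormula.imp _ _)).listEncode).map _ = _
    rw [BoundedFormula.relabel_imp]
    simp only [BoundedFormula.listEncode, List.map_append, List.map_cons]
    rw [ih₁, ih₂]
    simp [Encodable.encode_inr]

theorem gnum_relabel {m M : ℕ} (f : Fin m → Fin M)
    (hf : ∀ i, ((f i : ℕ)) = (i : ℕ)) (φ : L.Formula (Fin m)) (hφ : φ.IsQF) :
    gnum L (φ.relabel f) = gnum L φ :=
  encode_map_eq _ _ (listEncode_relabel_qf L f hf φ hφ)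

theorem gnum_injective {α : Type} [Encodable α] {n : ℕ} :
    Function.Injective (fun φ : L.BoundedFormula α n => gnum L φ) := by
  intro φ ψ h
  have h' : φ.listEncode = ψ.listEncode := Encodable.encode_injective h
  have h1 := BoundedFormula.listDecode_encode_list (L := L) (α := α) [⟨n, φ⟩]
  have h2 := BoundedFormula.listDecode_encode_list (L := L) (α := α) [⟨n, ψ⟩]
  rw [List.flatMap_singleton] at h1 h2
  rw [h'] at h1
  rw [h1] at h2
  have := List.head_eq_of_cons_eq h2.symm
  injection this with h3 h4
  exact h4.symm

theorem exists_gnum_bound {N : ℕ} (F : L.Formula (Fin N) → ℕ) :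
    ∃ p : ℕ, ∀ φ : L.Formula (Fin N), gnum L φ < N → F φ < p := by
  have hfin : {φ : L.Formula (Fin N) | gnum L φ < N}.Finite := by
    apply Set.Finite.of_finite_image (f := fun φ => gnum L φ)
    · exact (Set.finite_Iio N).subset (by rintro y ⟨φ, hφ, rfl⟩; exact hφ)
    · exact Set.injOn_of_injective (gnum_injective L)
  obtain ⟨p, hp⟩ := (hfin.image F).bddAbove
  refine ⟨p + 1, fun φ hφ => ?_⟩
  have := hp (Set.mem_image_of_mem F hφ)
  omega

end Enc2

open FirstOrder FirstOrder.Language Encodable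

section BF2
variable [∀ i, Encodable (L.Functions i)] [∀ i, Encodable (L.Relations i)]
variable (SA : L.Structure ℕ)

theorem getD_append_lt {l l' : List ℕ} {i : ℕ} (h : i < l.length) :
    (l ++ l').getD i 0 = l.getD i 0 := List.getD_append _ _ _ _ h

theorem realize_asg_congr {m : ℕ} (φ : L.Formula (Fin m)) {v w : Fin m → ℕ}
    (h : ∀ i, v i = w i) :
    @Formula.Realize L ℕ SA _ φ v ↔ @Formula.Realize L ℕ SA _ φ w :=
  iff_of_eq (congrArg _ (funext h))

theorem realize_relabel_asg {m N : ℕ} (ι : Fin m → Fin N) (φ : L.Formula (Fin m))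
    {v : Fin N → ℕ} {w : Fin m → ℕ} (h : ∀ i, v (ι i) = w i) :
    @Formula.Realize L ℕ SA _ (φ.relabel ι) v ↔ @Formula.Realize L ℕ SA _ φ w := by
  rw [Formula.realize_relabel]
  exact realize_asg_congr L SA φ h

theorem bf_mono {o γ : Ordinal.{0}} (hγo : γ ≤ o) {a b : List ℕ}
    (h : bf L SA o a b) : bf L SA γ a b := by
  rcases eq_or_lt_of_le hγo with rfl | hlt
  · exact h
  have ho : o ≠ 0 := by
    intro h0; rw [h0] at hlt; exact absurd hlt (not_lt_of_ge (zero_le (a := γ)))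
  have hlen := bf_length L SA h
  by_cases hγ : γ = 0
  · subst hγ
    rw [bf_zero]
    refine ⟨hlen, ?_⟩
    intro φ hφ hg hr
    by_contra hcon
    obtain ⟨c, hc, H0⟩ := ((bf_pos L SA ho).1 h).2 0 (pos_iff_ne_zero.2 ho)
      (List.replicate (gnum L (φ.not) + 1) 0)
    rw [bf_zero] at H0
    obtain ⟨hlen2, Q⟩ := H0
    have hle : a.length ≤ (b ++ List.replicate (gnum L (φ.not) + 1) 0).length := by
      simp [hlen]
    have hblen : b.length ≤ a.length := le_of_eq hlen.symm
    have hχqf : ((φ.not).relabel (Fin.castLE hle)).IsQF :=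
      BoundedFormula.IsQF.relabel hφ.not _
    have hχg : gnum L ((φ.not).relabel (Fin.castLE hle))
        < (b ++ List.replicate (gnum L (φ.not) + 1) 0).length := by
      rw [gnum_relabel L (Fin.castLE hle) (fun i => rfl) (φ.not) hφ.not]
      simp only [List.length_append, List.length_replicate]
      omega
    have hrb : @Formula.Realize L ℕ SA _ ((φ.not).relabel (Fin.castLE hle))
        (fun i => (b ++ List.replicate (gnum L (φ.not) + 1) 0).getD ((i : Fin _) : ℕ) 0) := by
      rw [realize_relabel_asg L SA (Fin.castLE hle) (φ.not)
        (w := fun i : Fin a.length => b.getD (i : ℕ) 0) ?_]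
      · rw [Formula.realize_not]
        exact hcon
      · intro i
        simp only [Fin.coe_castLE]
        exact getD_append_lt (by omega)
    have hres := Q _ hχqf hχg hrb
    rw [realize_relabel_asg L SA (Fin.castLE hle) (φ.not)
      (w := fun i : Fin a.length => a.getD (i : ℕ) 0) ?_] at hres
    · rw [Formula.realize_not] at hres
      exact hres hr
    · intro i
      simp only [Fin.coe_castLE]
      exact getD_append_lt i.isLt
  · rw [bf_pos L SA hγ]
    refine ⟨hlen, fun β hβ d => ((bf_pos L SA ho).1 h).2 β (hβ.trans hlt) d⟩

end BF2

open FirstOrder FirstOrder.Language Encodable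

section BF3
variable [∀ i, Encodable (L.Functions i)] [∀ i, Encodable (L.Relations i)]
variable (SA : L.Structure ℕ)

theorem fn_getD_map (F : ℕ → ℕ) (l : List ℕ) {n : ℕ} (hl : n ≤ l.length) (i : Fin n) :
    (l.map F).getD (i : ℕ) 0 = F (l.getD (i : ℕ) 0) := by
  have hi : (i : ℕ) < l.length := lt_of_lt_of_le i.isLt hl
  rw [List.getD_eq_getElem _ _ (by simpa using hi), List.getElem_map,
    List.getD_eq_getElem _ _ hi]

theorem bf_map {o : Ordinal.{0}} (σ : SIso L SA SA) :
    ∀ {a b : List ℕ}, bf L SA o a b →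
      bf L SA o (a.map (SIso.fn L σ)) (b.map (SIso.fn L σ)) := by
  letI := SA
  let σ' : ℕ ≃[L] ℕ := σ
  have hfn : SIso.fn L σ = ⇑σ' := rfl
  let σs : SIso L SA SA := @FirstOrder.Language.Equiv.symm L ℕ ℕ SA SA σ'
  have hss : ∀ x2, SIso.fn L σ (SIso.fn L σs x2) = x2 := fun x2 =>
    _root_.Equiv.apply_symm_apply σ'.toEquiv x2
  induction o using Ordinal.induction with
  | _ o ih =>
  intro a b h
  have hlen := bf_length L SA h
  by_cases ho : o = 0
  · subst ho
    rw [bf_zero] at h ⊢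
    obtain ⟨-, Q⟩ := h
    refine ⟨by simp [hlen], ?_⟩
    rw [List.length_map]
    intro φ hφ hg hr
    rw [realize_asg_congr L SA φ (w := ⇑σ' ∘ fun i : Fin a.length => a.getD (i : ℕ) 0)
      (fun i => by rw [fn_getD_map (SIso.fn L σ) _ le_rfl i]; rfl)] at hr
    rw [realize_asg_congr L SA φ (w := ⇑σ' ∘ fun i : Fin a.length => b.getD (i : ℕ) 0)
      (fun i => by rw [fn_getD_map (SIso.fn L σ) _ (le_of_eq hlen) i]; rfl)]
    rw [StrongHomClass.realize_formula σ'] at hr ⊢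
    exact Q φ hφ hg hr
  · rw [bf_pos L SA ho] at h ⊢
    refine ⟨by simp [hlen], fun β hβ d => ?_⟩
    obtain ⟨c0, hc0, H⟩ := h.2 β hβ (d.map (SIso.fn L σs))
    refine ⟨c0.map (SIso.fn L σ), by simp [hc0], ?_⟩
    have H2 := ih β hβ H
    rw [List.map_append, List.map_append] at H2
    rwa [List.map_map, show (SIso.fn L σ ∘ SIso.fn L σs) = id from funext hss,
      List.map_id] at H2

theorem bf_map_self (o : Ordinal.{0}) :
    ∀ (σ : SIso L SA SA) (w : List ℕ), bf L SA o w (w.map (SIso.fn L σ)) := by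
  letI := SA
  induction o using Ordinal.induction with
  | _ o ih =>
  intro σ w
  let σ' : ℕ ≃[L] ℕ := σ
  have hfn : SIso.fn L σ = ⇑σ' := rfl
  by_cases ho : o = 0
  · subst ho
    rw [bf_zero]
    refine ⟨by simp, ?_⟩
    intro φ hφ hg hr
    rw [realize_asg_congr L SA φ (w := ⇑σ' ∘ fun i : Fin w.length => w.getD (i : ℕ) 0)
      (fun i => by rw [fn_getD_map (SIso.fn L σ) _ le_rfl i]; rfl)]
    rw [StrongHomClass.realize_formula σ']
    exact hr
  · rw [bf_pos L SA ho]
    refine ⟨by simp, fun β hβ d => ?_⟩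
    let σs : SIso L SA SA := @FirstOrder.Language.Equiv.symm L ℕ ℕ SA SA σ'
    have hss : ∀ x2, SIso.fn L σs (SIso.fn L σ x2) = x2 := fun x2 =>
      _root_.Equiv.symm_apply_apply σ'.toEquiv x2
    refine ⟨d.map (SIso.fn L σs), by simp, ?_⟩
    have H := ih β hβ σs (w.map (SIso.fn L σ) ++ d)
    rw [List.map_append, List.map_map,
      show (SIso.fn L σs ∘ SIso.fn L σ) = id from funext hss, List.map_id] at H
    exact H

end BF3

open FirstOrder FirstOrder.Language Encodable

section BF4
variable [∀ i, Encodable (L.Functions i)] [∀ i, Encodable (L.Relations i)]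
variable (SA : L.Structure ℕ)

theorem key_pos (s t w d e : List ℕ) (m tl i : ℕ) (hm : m = s.length)
    (htl : tl = t.length) (hi : i < s.length + w.length + d.length) :
    (s ++ (t ++ (w ++ (d ++ e)))).getD (if i < m then i else i + tl) 0
      = (s ++ (w ++ d)).getD i 0 := by
  subst hm htl
  by_cases h1 : i < s.length
  · rw [if_pos h1, List.getD_append _ _ _ _ h1, List.getD_append _ _ _ _ h1]
  · rw [if_neg h1]
    have e1 : (s ++ (t ++ (w ++ (d ++ e)))).getD (i + t.length) 0
        = (t ++ (w ++ (d ++ e))).getD (i + t.length - s.length) 0 :=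
      List.getD_append_right s (t ++ (w ++ (d ++ e))) 0 _ (by omega)
    have e2 : (t ++ (w ++ (d ++ e))).getD (i + t.length - s.length) 0
        = (w ++ (d ++ e)).getD (i - s.length) 0 := by
      rw [List.getD_append_right t (w ++ (d ++ e)) 0 _ (by omega)]
      congr 1
      omega
    have e3 : (s ++ (w ++ d)).getD i 0 = (w ++ d).getD (i - s.length) 0 :=
      List.getD_append_right s (w ++ d) 0 i (by omega)
    rw [e1, e2, e3]
    by_cases h2 : i - s.length < w.length
    · rw [List.getD_append w (d ++ e) 0 _ h2, List.getD_append w d 0 _ h2]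
    · rw [List.getD_append_right w (d ++ e) 0 _ (by omega),
        List.getD_append_right w d 0 _ (by omega),
        List.getD_append d e 0 _ (by omega)]

theorem bf_del (o : Ordinal.{0}) : ∀ (s s' t t' w w' : List ℕ),
    s.length = s'.length → t.length = t'.length → w.length = w'.length →
    (o = 0 → w = [] ∧ w' = []) →
    bf L SA o (s ++ (t ++ w)) (s' ++ (t' ++ w')) → bf L SA o (s ++ w) (s' ++ w') := by
  induction o using Ordinal.induction with
  | _ o ih =>
  intro s s' t t' w w' hss htt hww h0 h
  by_cases ho : o = 0
  · subst ho
    obtain ⟨rfl, rfl⟩ := h0 rfl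
    simp only [List.append_nil] at h ⊢
    rw [bf_zero] at h ⊢
    obtain ⟨hL, Q⟩ := h
    refine ⟨hss, ?_⟩
    intro φ hφ hg hr
    have hle : s.length ≤ (s ++ t).length := by simp
    have hqf : ((φ.relabel (Fin.castLE hle)).IsQF) := BoundedFormula.IsQF.relabel hφ _
    have hgn : gnum L (φ.relabel (Fin.castLE hle)) < (s ++ t).length := by
      rw [gnum_relabel L (Fin.castLE hle) (fun i => rfl) φ hφ]
      simp only [List.length_append]
      omega
    have h1 := Q _ hqf hgn ((realize_relabel_asg L SA (Fin.castLE hle) φ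
      (w := fun i : Fin s.length => s.getD (i : ℕ) 0) ?_).2 hr)
    · rw [realize_relabel_asg L SA (Fin.castLE hle) φ
        (w := fun i : Fin s.length => s'.getD (i : ℕ) 0) ?_] at h1
      · exact h1
      · intro i
        simp only [Fin.coe_castLE]
        exact getD_append_lt (by omega)
    · intro i
      simp only [Fin.coe_castLE]
      exact getD_append_lt i.isLt
  · rw [bf_pos L SA ho] at h ⊢
    obtain ⟨hL, G⟩ := h
    simp only [List.length_append] at hL
    refine ⟨by simp only [List.length_append]; omega, ?_⟩
    intro β hβ d
    by_cases hb : β = 0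
    · subst hb
      set Ns := ((s' ++ w') ++ d).length with hNs
      set NB := s'.length + t'.length + (w'.length + d.length) with hNB
      have hNs' : Ns = s'.length + w'.length + d.length := by
        rw [hNs]
        simp only [List.length_append]
        try omega
      have hιbound : ∀ i : Fin Ns, (if (i : ℕ) < s'.length then (i : ℕ)
          else (i : ℕ) + t'.length) < NB := by
        intro i
        have h1 := i.isLt
        by_cases hc : (i : ℕ) < s'.length
        · rw [if_pos hc]; omega
        · rw [if_neg hc]; omega
      set ι : Fin Ns → Fin NB := fun i => ⟨_, hιbound i⟩ with hι
      obtain ⟨p, hp⟩ := exists_gnum_bound L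
        (fun ψ : L.Formula (Fin Ns) => gnum L (ψ.relabel ι))
      obtain ⟨c', hc', H0⟩ := G 0 (pos_iff_ne_zero.2 ho)
        (d ++ List.replicate p 0)
      simp only [List.append_assoc] at H0
      rw [bf_zero] at H0
      obtain ⟨hL2, Q⟩ := H0
      simp only [List.length_append, List.length_replicate] at hL2 hc'
      refine ⟨c'.take d.length, by simp only [List.length_take]; omega, ?_⟩
      rw [bf_zero]
      refine ⟨by simp only [List.length_append, List.length_take]; omega, ?_⟩
      intro φ hφ hg hr
      have hle2 : NB ≤ (s' ++ (t' ++ (w' ++ (d ++ List.replicate p 0)))).length := by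
        simp only [List.length_append, List.length_replicate]
        omega
      have hqf1 : (φ.relabel ι).IsQF := BoundedFormula.IsQF.relabel hφ _
      have hqf2 : ((φ.relabel ι).relabel (Fin.castLE hle2)).IsQF :=
        BoundedFormula.IsQF.relabel hqf1 _
      have hgn2 : gnum L ((φ.relabel ι).relabel (Fin.castLE hle2))
          < (s' ++ (t' ++ (w' ++ (d ++ List.replicate p 0)))).length := by
        rw [gnum_relabel L (Fin.castLE hle2) (fun i => rfl) (φ.relabel ι) hqf1]
        have h2 := hp φ hg
        simp only [List.length_append, List.length_replicate]
        omega
      have hrise : @Formula.Realize L ℕ SA _ ((φ.relabel ι).relabel (Fin.castLE hle2))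
          (fun i => (s' ++ (t' ++ (w' ++ (d ++ List.replicate p 0)))).getD ((i : Fin _) : ℕ) 0) := by
        rw [realize_relabel_asg L SA (Fin.castLE hle2) (φ.relabel ι)
          (w := fun j : Fin NB =>
            (s' ++ (t' ++ (w' ++ (d ++ List.replicate p 0)))).getD ((j : Fin NB) : ℕ) 0)
          (fun j => by simp only [Fin.coe_castLE])]
        rw [realize_relabel_asg L SA ι φ
          (w := fun i : Fin Ns => ((s' ++ w') ++ d).getD ((i : Fin Ns) : ℕ) 0) ?_]
        · exact hr
        · intro i
          show (s' ++ (t' ++ (w' ++ (d ++ List.replicate p 0)))).getD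
            (if (i : ℕ) < s'.length then (i : ℕ) else (i : ℕ) + t'.length) 0
            = ((s' ++ w') ++ d).getD (i : ℕ) 0
          rw [key_pos s' t' w' d (List.replicate p 0) _ _ _ rfl rfl
            (by have h1 := i.isLt; omega)]
          rw [List.append_assoc]
      have hres := Q _ hqf2 hgn2 hrise
      rw [realize_relabel_asg L SA (Fin.castLE hle2) (φ.relabel ι)
        (w := fun j : Fin NB =>
          (s ++ (t ++ (w ++ c'))).getD ((j : Fin NB) : ℕ) 0)
        (fun j => by simp only [Fin.coe_castLE])] at hres
      rw [realize_relabel_asg L SA ι φ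
        (w := fun i : Fin Ns => ((s ++ w) ++ c'.take d.length).getD ((i : Fin Ns) : ℕ) 0) ?_] at hres
      · exact hres
      · intro i
        show (s ++ (t ++ (w ++ c'))).getD
          (if (i : ℕ) < s'.length then (i : ℕ) else (i : ℕ) + t'.length) 0
          = ((s ++ w) ++ c'.take d.length).getD (i : ℕ) 0
        have hsplit : s ++ (t ++ (w ++ c'))
            = s ++ (t ++ (w ++ (c'.take d.length ++ c'.drop d.length))) := by
          rw [List.take_append_drop]
        rw [hsplit]
        rw [key_pos s t w (c'.take d.length) (c'.drop d.length) _ _ _ hss.symm htt.symm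
          (by have h1 := i.isLt; simp only [List.length_take]; omega)]
        rw [List.append_assoc]
    · obtain ⟨c, hc, H⟩ := G β hβ d
      refine ⟨c, hc, ?_⟩
      simp only [List.append_assoc] at H ⊢
      exact ih β hβ s' s t' t (w' ++ d) (w ++ c) hss.symm htt.symm
        (by simp [hww, hc]) (fun hcon => absurd hcon hb) H

theorem bf_take {o : Ordinal.{0}} {a b : List ℕ} (m : ℕ) (h : bf L SA o a b) :
    bf L SA o (a.take m) (b.take m) := by
  have hlen := bf_length L SA h
  have := bf_del L SA o (a.take m) (b.take m) (a.drop m) (b.drop m) [] []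
    (by simp [hlen]) (by simp [hlen]) rfl (fun _ => ⟨rfl, rfl⟩)
    (by simpa [List.take_append_drop] using h)
  simpa using this

end BF4

end AuxBF

/-- (Lemma on making partial isomorphisms different.) Given
`α_i > β_i` with `β₁ ≥ ⋯ ≥ β_n`, tuples `ū_i, v̄_i` with `|ū_{i+1}| = |ū_i| + |v̄_i|`
and `v̄_i` `α_i`-free over `ū_i`, and any sufficiently long tuple `x̄`, there is a
tuple `ȳ` agreeing with `x̄` on the first `|ū₁|` entries, with
`x̄ ↾ (|ū_i|+|v̄_i|) ≤_{β_i} ȳ ↾ (|ū_i|+|v̄_i|)`, and with `ȳ ↾ (|ū_i|+|v̄_i|)` not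
automorphic to `ū_i v̄_i`, for each `i`. -/
theorem partial_isos_different
    (L : FirstOrder.Language.{0, 0}) [∀ i, Encodable (L.Functions i)]
    [∀ i, Encodable (L.Relations i)] (SA : L.Structure ℕ)
    (n : ℕ) (x : List ℕ) (a b : Fin n → Ordinal.{0}) (u v : Fin n → List ℕ)
    (hab : ∀ i : Fin n, b i < a i)
    (hmono : ∀ i j : Fin n, i ≤ j → b j ≤ b i)
    (hlen : ∀ (i : Fin n) (h : (i : ℕ) + 1 < n),
      (u ⟨(i : ℕ) + 1, h⟩).length = (u i).length + (v i).length)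
    (hx : ∀ i : Fin n, (u i).length + (v i).length ≤ x.length)
    (hfree : ∀ i : Fin n, AlphaFree L SA (a i) (v i) (u i)) :
    ∃ y : List ℕ, y.length = x.length ∧
      (∀ h : 0 < n, y.take (u ⟨0, h⟩).length = x.take (u ⟨0, h⟩).length) ∧
      (∀ i : Fin n, bf L SA (b i) (x.take ((u i).length + (v i).length))
        (y.take ((u i).length + (v i).length))) ∧
      (∀ i : Fin n, ¬ ∃ g : SIso L SA SA,
        (y.take ((u i).length + (v i).length)).map (SIso.fn L g) = u i ++ v i) := by
  classical
  set k : Fin n → ℕ := fun i => (u i).length + (v i).length with hk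
  have hkapp : ∀ i2 : Fin n, k i2 = (u i2).length + (v i2).length := fun _ => rfl
  have hk_mono_nat : ∀ (d p : ℕ) (hp : p < n) (hpd : p + d < n),
      k ⟨p, hp⟩ ≤ k ⟨p + d, hpd⟩ := by
    intro d
    induction d with
    | zero =>
      intro p hp hpd
      have e : (⟨p, hp⟩ : Fin n) = ⟨p + 0, hpd⟩ := Fin.ext (by show p = p + 0; omega)
      rw [e]
    | succ d ih =>
      intro p hp hpd
      have hpd' : p + d < n := by omega
      have h1 := ih p hp hpd'
      have hq : (((⟨p + d, hpd'⟩ : Fin n) : ℕ) + 1) < n := by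
        show p + d + 1 < n
        omega
      have h2 := hlen ⟨p + d, hpd'⟩ hq
      refine le_trans h1 ?_
      show (u ⟨p + d, hpd'⟩).length + (v ⟨p + d, hpd'⟩).length
        ≤ (u ⟨p + (d + 1), hpd⟩).length + (v ⟨p + (d + 1), hpd⟩).length
      have h3 : (u ⟨p + d, hpd'⟩).length + (v ⟨p + d, hpd'⟩).length
          = (u ⟨p + (d + 1), hpd⟩).length := h2.symm
      rw [h3]
      exact Nat.le_add_right _ _
  have hk_mono' : ∀ i j : Fin n, i ≤ j → k i ≤ k j := by
    intro i j hij
    rw [Fin.le_def] at hij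
    have hX : (i : ℕ) + ((j : ℕ) - (i : ℕ)) < n := by have := j.isLt; omega
    have h1 := hk_mono_nat ((j : ℕ) - (i : ℕ)) (i : ℕ) i.isLt hX
    have e1 : (⟨(i : ℕ), i.isLt⟩ : Fin n) = i := Fin.ext rfl
    have e2 : (⟨(i : ℕ) + ((j : ℕ) - (i : ℕ)), hX⟩ : Fin n) = j :=
      Fin.ext (by show (i : ℕ) + ((j : ℕ) - (i : ℕ)) = (j : ℕ); omega)
    rwa [e1, e2] at h1
  have hu_lt : ∀ j i2 : Fin n, (j : ℕ) < (i2 : ℕ) → k j ≤ (u i2).length := by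
    intro j i2 hji
    have hX : (i2 : ℕ) - 1 < n := by have := i2.isLt; omega
    have h1 : k j ≤ k ⟨(i2 : ℕ) - 1, hX⟩ := by
      refine hk_mono' j ⟨(i2 : ℕ) - 1, hX⟩ ?_
      rw [Fin.le_def]
      show (j : ℕ) ≤ (i2 : ℕ) - 1
      omega
    have hq : (((⟨(i2 : ℕ) - 1, hX⟩ : Fin n) : ℕ) + 1) < n := by
      show (i2 : ℕ) - 1 + 1 < n
      have := i2.isLt
      omega
    have h2 := hlen ⟨(i2 : ℕ) - 1, hX⟩ hq
    have e : (⟨(((⟨(i2 : ℕ) - 1, hX⟩ : Fin n)) : ℕ) + 1, hq⟩ : Fin n) = i2 := by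
      apply Fin.ext
      show (i2 : ℕ) - 1 + 1 = (i2 : ℕ)
      omega
    rw [e] at h2
    simp only [hkapp] at h1 ⊢
    omega
  have hu0 : ∀ (h0 : 0 < n) (i2 : Fin n), (u ⟨0, h0⟩).length ≤ (u i2).length := by
    intro h0 i2
    by_cases hz : (i2 : ℕ) = 0
    · have e : i2 = ⟨0, h0⟩ := Fin.ext (by exact hz)
      rw [e]
    · have h1 : k ⟨0, h0⟩ ≤ (u i2).length := by
        refine hu_lt ⟨0, h0⟩ i2 ?_
        show 0 < (i2 : ℕ)
        omega
      have h2 : (u ⟨0, h0⟩).length ≤ k ⟨0, h0⟩ := Nat.le_add_right _ _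
      omega
  have MAIN : ∀ m : ℕ, m ≤ n → ∃ Y : List ℕ, Y.length = x.length ∧
      (∀ h0 : 0 < n, Y.take (u ⟨0, h0⟩).length = x.take (u ⟨0, h0⟩).length) ∧
      (∀ j : Fin n, (j : ℕ) < m → (bf L SA (b j) (x.take (k j)) (Y.take (k j)) ∧
        ¬ ∃ g : SIso L SA SA, (Y.take (k j)).map (SIso.fn L g) = u j ++ v j)) ∧
      (∀ j : Fin n, m ≤ (j : ℕ) → bf L SA (b j) x Y) := by
    intro m
    induction m with
    | zero =>
      intro _
      exact ⟨x, rfl, fun _ => rfl, fun j hj => absurd hj (Nat.not_lt_zero _),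
        fun j _ => bf_refl L SA _ x⟩
    | succ m IH =>
      intro hm1
      obtain ⟨Y, hYlen, hY0, hYold, hYfut⟩ := IH (by omega)
      have hm : m < n := hm1
      set i : Fin n := ⟨m, hm⟩ with hidef
      have him : (i : ℕ) = m := rfl
      have hkx : k i ≤ x.length := hx i
      have hkY : k i ≤ Y.length := by omega
      by_cases hcase : ∃ g : SIso L SA SA, (Y.take (k i)).map (SIso.fn L g) = u i ++ v i
      · -- need to modify Y
        letI := SA
        obtain ⟨g, hg⟩ := hcase
        let g' : ℕ ≃[L] ℕ := g
        let gs : SIso L SA SA := (g'.symm : ℕ ≃[L] ℕ)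
        have hgs1 : ∀ z, SIso.fn L gs (SIso.fn L g z) = z := fun z =>
          _root_.Equiv.symm_apply_apply g'.toEquiv z
        have hcomp1 : (SIso.fn L gs ∘ SIso.fn L g) = id := funext hgs1
        obtain ⟨a', a1', ha'l, ha1'l, Hbf, Hneg⟩ :=
          hfree i ((Y.drop (k i)).map (SIso.fn L g)) (b i) (hab i)
        have hK1 : ((u i ++ v i) ++ (Y.drop (k i)).map (SIso.fn L g)).map (SIso.fn L gs)
            = Y := by
          rw [List.map_append, ← hg, List.map_map, List.map_map, hcomp1, List.map_id,
            List.map_id, List.take_append_drop]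
        have hlink : bf L SA (b i) Y (((u i ++ a') ++ a1').map (SIso.fn L gs)) := by
          have h2 := bf_map L SA gs Hbf
          rwa [hK1] at h2
        set Y' := ((u i ++ a') ++ a1').map (SIso.fn L gs) with hY'def
        have hYY' : Y.length = Y'.length := bf_length L SA hlink
        have hY'len : Y'.length = x.length := by omega
        have hpre : ∀ m', m' ≤ (u i).length → Y'.take m' = Y.take m' := by
          intro m' hm'
          rw [hY'def, ← hK1, ← List.map_take, ← List.map_take]
          congr 1
          have e1 : ((u i ++ a') ++ a1').take m' = (u i).take m' := by
            rw [List.take_append_of_le_length (le_trans hm' (by simp)),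
              List.take_append_of_le_length hm']
          have e2 : ((u i ++ v i) ++ (Y.drop (k i)).map (SIso.fn L g)).take m'
              = (u i).take m' := by
            rw [List.take_append_of_le_length (le_trans hm' (by simp)),
              List.take_append_of_le_length hm']
          rw [e1, e2]
        have hY'take : Y'.take (k i) = (u i ++ a').map (SIso.fn L gs) := by
          rw [hY'def, ← List.map_take]
          congr 1
          apply List.take_left'
          simp [ha'l, hk]
        refine ⟨Y', hY'len, ?_, ?_, ?_⟩
        · intro h0
          rw [hpre _ (hu0 h0 i)]
          exact hY0 h0
        · intro j hj
          rcases Nat.lt_or_ge (j : ℕ) m with hjm | hjm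
          · rw [hpre (k j) (hu_lt j i hjm)]
            exact hYold j hjm
          · have hji : j = i := Fin.ext (by omega)
            rw [hji]
            constructor
            · exact bf_take L SA (k i) (bf_trans L SA (hYfut i le_rfl) hlink)
            · rintro ⟨τ, hτ⟩
              apply Hneg
              let τ' : ℕ ≃[L] ℕ := τ
              let σc : SIso L SA SA :=
                (@FirstOrder.Language.Equiv.comp L ℕ ℕ SA SA ℕ SA τ' g'.symm : ℕ ≃[L] ℕ)
              have h4 : (u i ++ a').map (SIso.fn L σc) = u i ++ v i := by
                have h5 : (u i ++ a').map (SIso.fn L σc)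
                    = ((u i ++ a').map (SIso.fn L gs)).map (SIso.fn L τ) := by
                  rw [List.map_map]
                  rfl
                rw [h5, ← hY'take, hτ]
              have h6 := bf_map_self L SA (a i) σc (u i ++ a')
              rwa [h4] at h6
        · intro j hj
          have hij : i ≤ j := by rw [Fin.le_def]; omega
          exact bf_trans L SA (hYfut j (by omega))
            (bf_mono L SA (hmono i j hij) hlink)
      · refine ⟨Y, hYlen, hY0, ?_, fun j hj => hYfut j (by omega)⟩
        intro j hj
        rcases Nat.lt_or_ge (j : ℕ) m with hjm | hjm
        · exact hYold j hjm
        · have hji : j = i := Fin.ext (by omega)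
          rw [hji]
          exact ⟨bf_take L SA (k i) (hYfut i le_rfl), hcase⟩
  obtain ⟨Y, h1, h2, h3, h4⟩ := MAIN n le_rfl
  exact ⟨Y, h1, h2, fun i2 => (h3 i2 i2.isLt).1, fun i2 => (h3 i2 i2.isLt).2⟩


end DCC
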